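/- In the field of rational functions in t over ℚ(λ,μ,K1,K2), setting u := (F̄2 − t²F2)/(t²F1 + F̄1), the hyperelliptic equation 𝒲² = R6(t) of the second genus-2 curve C′ is equivalent to its compact form: the identity R6(t)·(F2 + F1·u)³ = 32H³·[(K1+1)u³ + (3μ−3λ+K2)u² + (K1−3)u + λ − μ + K2 − t·(F2 + F1·u)·(u² − 1)] holds, where R6, F1, F2, F̄1, F̄2, H are defined below. -/

import Mathlib

noncomputable section

/-- The field `ℚ(λ,μ,K1,K2,t)` of rational functions in five indeterminates. -/
abbrev F5 : Type := FractionRing (MvPolynomial (Fin 5) ℚ)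

/-- The five generators `λ, μ, K1, K2, t` of `F5`. -/
def gen5 (i : Fin 5) : F5 :=
  algebraMap (MvPolynomial (Fin 5) ℚ) F5 (MvPolynomial.X i)

variable {K : Type*} [Field K]

/-- The sextic `R6(t)` defining the hyperelliptic form `𝒲² = R6(t)` of the second
genus-2 curve `C′`. -/
def R6 (lam mu k1 k2 t : K) : K :=
  let F1 := 2*lam + 1 + 2*mu + k1
  let F2 := 2 + lam - mu + k2
  let Fb1 := 2*lam - 1 + 2*mu - k1
  let Fb2 := -2 + lam - mu + k2
  let H := (lam + mu)*F2 - F1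
  let c6 := (lam + mu)*F2^3 - (2*lam - 2*mu + 1)*F1*F2^2 + (lam + mu + 2)*F1^2*F2 - F1^3
  let c0 := (lam + mu)*Fb2^3 - (2*lam - 2*mu - 1)*Fb1*Fb2^2 + (lam + mu - 2)*Fb1^2*Fb2 + Fb1^3
  let c5 := 2*H*(F1^2 - F2^2)
  let c3 := 4*H*(F1*Fb1 + F2*Fb2)
  let c1 := 2*H*(Fb1^2 - Fb2^2)
  let c4 := F1^3 - (mu + lam + 6)*F1^2*F2 - 8*(mu + lam - 1)*F1^2
    + (6*lam - 6*mu + 1)*F1*F2^2 + 8*(mu^2 + 2*mu*lam + lam^2 + 4*mu - 1)*F2*F1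
    - (mu + lam)*F2^3 + 8*(mu^2 - lam^2 + mu + lam)*F2^2
  let c2 := -Fb1^3 - (mu + lam - 6)*Fb2*Fb1^2 + 8*(mu + lam + 1)*Fb1^2
    + (6*lam - 6*mu - 1)*Fb1*Fb2^2 + 8*(mu^2 + 2*mu*lam + lam^2 - 4*mu - 1)*Fb1*Fb2
    - (mu + lam)*Fb2^3 + 8*(mu^2 - lam^2 - mu - lam)*Fb2^2
  c6*t^6 + c5*t^5 + c4*t^4 + c3*t^3 + c2*t^2 + c1*t + c0

set_option maxHeartbeats 4000000 in
/-- Compact form of the curve `C′`: with `u = (F̄2 − t²F2)/(t²F1 + F̄1)`, the identity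
`R6(t)·(F2+F1u)³ = 32H³·[(K1+1)u³+(3μ−3λ+K2)u²+(K1−3)u+λ−μ+K2 − t(F2+F1u)(u²−1)]`
holds in the field of rational functions in `t` over `ℚ(λ,μ,K1,K2)`. -/
theorem R6_compact_form :
    let lam : F5 := gen5 0
    let mu : F5 := gen5 1
    let k1 : F5 := gen5 2
    let k2 : F5 := gen5 3
    let t : F5 := gen5 4
    let F1 : F5 := 2*lam + 1 + 2*mu + k1
    let F2 : F5 := 2 + lam - mu + k2
    let Fb1 : F5 := 2*lam - 1 + 2*mu - k1
    let Fb2 : F5 := -2 + lam - mu + k2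
    let H : F5 := (lam + mu)*F2 - F1
    let u : F5 := (Fb2 - t^2*F2) / (t^2*F1 + Fb1)
    R6 lam mu k1 k2 t * (F2 + F1*u)^3
      = 32*H^3 * ((k1 + 1)*u^3 + (3*mu - 3*lam + k2)*u^2 + (k1 - 3)*u
          + lam - mu + k2 - t*(F2 + F1*u)*(u^2 - 1)) := by
  intro lam mu k1 k2 t F1 F2 Fb1 Fb2 H u
  have hden : (t^2*F1 + Fb1) ≠ 0 := by
    have hp : (t^2*F1 + Fb1)
        = algebraMap (MvPolynomial (Fin 5) ℚ) F5
          ((MvPolynomial.X 4)^2*(2*MvPolynomial.X 0 + 1 + 2*MvPolynomial.X 1 + MvPolynomial.X 2)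
            + (2*MvPolynomial.X 0 - 1 + 2*MvPolynomial.X 1 - MvPolynomial.X 2)) := by
      simp only [F1, Fb1, t, lam, mu, k1, gen5, map_add, map_mul, map_pow, map_sub,
        map_ofNat, map_one]
    rw [hp]
    intro h
    have h0 := (IsFractionRing.injective (MvPolynomial (Fin 5) ℚ) F5)
      (h.trans (map_zero _).symm)
    have := congrArg (MvPolynomial.eval (fun _ => (0:ℚ))) h0
    simp at this
  have key : R6 lam mu k1 k2 t * (F2*Fb1 + F1*Fb2)^3
      = 32*H^3*((k1+1)*(Fb2 - t^2*F2)^3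
        + (3*mu - 3*lam + k2)*(Fb2 - t^2*F2)^2*(t^2*F1 + Fb1)
        + (k1-3)*(Fb2 - t^2*F2)*(t^2*F1 + Fb1)^2
        + (lam - mu + k2)*(t^2*F1 + Fb1)^3
        - t*(F2*Fb1 + F1*Fb2)*((Fb2 - t^2*F2)^2 - (t^2*F1 + Fb1)^2)) := by
    have hGH : F2*Fb1 + F1*Fb2 = 4*H := by
      simp only [F1, F2, Fb1, Fb2, H]; ring
    have key2 : (k1+1)*(Fb2 - t^2*F2)^3
        + (3*mu - 3*lam + k2)*(Fb2 - t^2*F2)^2*(t^2*F1 + Fb1)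
        + (k1-3)*(Fb2 - t^2*F2)*(t^2*F1 + Fb1)^2
        + (lam - mu + k2)*(t^2*F1 + Fb1)^3
        - t*(F2*Fb1 + F1*Fb2)*((Fb2 - t^2*F2)^2 - (t^2*F1 + Fb1)^2)
        = 2 * R6 lam mu k1 k2 t := by
      simp only [R6, F1, F2, Fb1, Fb2, H]
      ring
    rw [key2, hGH]
    obtain ⟨HH, hHH⟩ : ∃ x : F5, x = H := ⟨_, rfl⟩
    obtain ⟨RR, hRR⟩ : ∃ x : F5, x = R6 lam mu k1 k2 t := ⟨_, rfl⟩
    rw [← hHH, ← hRR]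
    ring
  have hG : F2 + F1*u = (F2*Fb1 + F1*Fb2) / (t^2*F1 + Fb1) := by
    rw [show u = (Fb2 - t^2*F2) / (t^2*F1 + Fb1) from rfl, eq_div_iff hden]
    have e : (Fb2 - t^2*F2) / (t^2*F1 + Fb1) * (t^2*F1 + Fb1) = Fb2 - t^2*F2 :=
      div_mul_cancel₀ _ hden
    linear_combination F1 * e
  have h3 : (t^2*F1 + Fb1)^3 ≠ 0 := pow_ne_zero _ hden
  rw [hG, show u = (Fb2 - t^2*F2) / (t^2*F1 + Fb1) from rfl, div_pow, ← mul_div_assoc,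
    div_eq_iff h3, key]
  obtain ⟨D, hDd⟩ : ∃ x : F5, x = t^2*F1 + Fb1 := ⟨_, rfl⟩
  obtain ⟨N, hNd⟩ : ∃ x : F5, x = Fb2 - t^2*F2 := ⟨_, rfl⟩
  obtain ⟨G, hGd⟩ : ∃ x : F5, x = F2*Fb1 + F1*Fb2 := ⟨_, rfl⟩
  obtain ⟨W, hWd⟩ : ∃ x : F5, x = 32*H^3 := ⟨_, rfl⟩
  obtain ⟨T, hTd⟩ : ∃ x : F5, x = t := ⟨_, rfl⟩
  obtain ⟨P1, hP1⟩ : ∃ x : F5, x = lam := ⟨_, rfl⟩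
  obtain ⟨P2, hP2⟩ : ∃ x : F5, x = mu := ⟨_, rfl⟩
  obtain ⟨P3, hP3⟩ : ∃ x : F5, x = k1 := ⟨_, rfl⟩
  obtain ⟨P4, hP4⟩ : ∃ x : F5, x = k2 := ⟨_, rfl⟩
  rw [← hDd] at hden
  rw [← hDd, ← hNd, ← hGd, ← hWd, ← hTd, ← hP1, ← hP2, ← hP3, ← hP4]
  field_simp [hden]
  ring
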